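/- Let R be a discrete valuation ring of mixed characteristic (0, p) with a ring endomorphism φ_R. Let C be a bounded complex of R_φ-modules which is perfect as a complex of R-modules and nondegenerate (the linearization L φ_R^* C ⊗ ℚ → C ⊗ ℚ is a quasi-isomorphism). Suppose H^a(C) is the top nonvanishing cohomology, and P ↠ H^a(C) is an R-linear surjection from a finitely generated projective R-module. Then there exists a φ_R-semilinear endomorphism φ_P of P lifting the φ-action on H^a(C) such that the R-linear extension φ_R^* P → P becomes an isomorphism after tensoring with ℚ. -/

import Mathlib

open Polynomial Matrix in
private lemma charpoly_eval_smul {K : Type} [Field K] {m : Type} [Fintype m] [DecidableEq m]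
    (M : Matrix m m K) (t : K) :
    M.charpoly.eval t = (t • (1 : Matrix m m K) - M).det := by
  rw [Matrix.charpoly, ← Polynomial.coe_evalRingHom, RingHom.map_det]
  congr 1
  ext i j
  by_cases h : i = j <;>
    simp [h, charmatrix_apply, Matrix.one_apply, Matrix.diagonal_apply, Matrix.smul_apply]

open Polynomial Matrix in
private lemma exists_det_add_ne_zero {R K : Type} [CommRing R] [Field K] [Infinite R]
    (f : R →+* K) (hf : Function.Injective f) {m : Type} [Fintype m] [DecidableEq m]
    (U : Matrix m m K) :
    ∃ c : R, ((f c) • (1 : Matrix m m K) + U).det ≠ 0 := by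
  have hq : (-U).charpoly ≠ 0 := ((-U).charpoly_monic).ne_zero
  have hfin : {x : K | ((-U).charpoly).IsRoot x}.Finite := Polynomial.finite_setOf_isRoot hq
  have hfin2 : (f ⁻¹' {x : K | ((-U).charpoly).IsRoot x}).Finite :=
    Set.Finite.preimage hf.injOn hfin
  obtain ⟨c, hc⟩ := (hfin2.infinite_compl).nonempty
  refine ⟨c, ?_⟩
  have := charpoly_eval_smul (-U) (f c)
  rw [sub_neg_eq_add] at this
  rw [← this]
  simpa [Polynomial.IsRoot] using hc

set_option maxHeartbeats 2000000 in
theorem nondegenerate_lift_to_projective_cover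
    {R : Type} [CommRing R] [IsDomain R] [IsDiscreteValuationRing R]
    (p : ℕ) (hp : p.Prime) [MixedCharZero R p]
    (φR : R →+* R)
    -- a bounded complex of `R_φ`-modules
    (X : ℤ → Type) [∀ i, AddCommGroup (X i)] [∀ i, Module R (X i)]
    (d : ∀ i : ℤ, X i →ₗ[R] X (i + 1))
    (hdd : ∀ i (x : X i), d (i + 1) (d i x) = 0)
    (φ : ∀ i, X i →ₛₗ[φR] X i)
    (hφd : ∀ i (x : X i), φ (i + 1) (d i x) = d i (φ i x))
    (n₀ n₁ : ℤ) (hbdd : ∀ i, (i < n₀ ∨ n₁ < i) → ∀ x : X i, x = 0)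
    -- its cohomology, with the induced semilinear endomorphisms
    (H : ℤ → Type) [∀ j, AddCommGroup (H j)] [∀ j, Module R (H j)]
    (π : ∀ j, LinearMap.ker (d j) →ₗ[R] H j)
    (hπsurj : ∀ j, Function.Surjective (π j))
    (hπker : ∀ i (z : LinearMap.ker (d (i + 1))),
      π (i + 1) z = 0 ↔ ∃ y : X i, d i y = (z : X (i + 1)))
    (φH : ∀ j, H j →ₛₗ[φR] H j)
    (hφH : ∀ j (z : LinearMap.ker (d j)),
      φH j (π j z) = π j ⟨φ j (z : X j), by
        have h1 : d j ((z : X j)) = 0 := z.2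
        have h2 : φ (j + 1) (d j (z : X j)) = d j (φ j (z : X j)) := hφd j z
        simp only [LinearMap.mem_ker]
        rw [← h2, h1, map_zero]⟩)
    -- `C` is perfect as a complex of `R`-modules
    (hperf : ∀ j, Module.Finite R (H j))
    -- `C` is nondegenerate
    (hnd : ∀ j, ∃ k : ℕ, ∀ h : H j,
      (p : R) ^ k • h ∈ Submodule.span R (Set.range (φH j)))
    -- `H^a(C)` is the top nonvanishing cohomology
    (a : ℤ) (htop : ∀ j, a < j → ∀ h : H j, h = 0)
    -- a surjection from a finitely generated projective module
    (P : Type) [AddCommGroup P] [Module R P] [Module.Finite R P] [Module.Projective R P]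
    (pr : P →ₗ[R] H a) (hpr : Function.Surjective pr) :
    ∃ φP : P →ₛₗ[φR] P,
      (∀ x : P, pr (φP x) = φH a (pr x)) ∧
        ∀ (ι : Type) (b : Module.Basis ι R P), LinearIndependent R (fun i => φP (b i)) := by
  classical
  haveI : CharZero R := MixedCharZero.toCharZero (R := R) (p := p)
  obtain ⟨k, hk⟩ := hnd a
  haveI := hperf a
  haveI : Module.FinitePresentation R P := Module.finitePresentation_of_projective R P
  haveI : Module.Free R P := Module.free_of_flat_of_isLocalRing
  set K := FractionRing R with hKdef
  have hinj : Function.Injective (algebraMap R K) := IsFractionRing.injective R K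
  set ι₀ := Module.Free.ChooseBasisIndex R P with hι₀def
  let e : Module.Basis ι₀ R P := Module.Free.chooseBasis R P
  obtain ⟨y, hy, hyind⟩ :
      ∃ y : ι₀ → P, (∀ i, pr (y i) = φH a (pr (e i))) ∧ LinearIndependent R y := by
    -- coordinates of `P` in the `K`-vector space `ι₀ → K`
    let c : P →ₗ[R] (ι₀ → K) :=
      { toFun := fun v i => algebraMap R K (e.repr v i)
        map_add' := by intro u v; funext i; simp
        map_smul' := by intro r v; funext i; simp [Algebra.smul_def] }
    have hc : Function.Injective c := by
      intro u v huv
      apply e.repr.injective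
      ext i
      exact hinj (congrFun huv i)
    -- the kernel of `pr` and a basis of it
    obtain ⟨m, g⟩ := Submodule.basisOfPid e (LinearMap.ker pr)
    have hgker : ∀ j, pr ((g j : P)) = 0 := fun j => (g j).2
    let gc : Fin m → (ι₀ → K) := fun j => c ((g j : P))
    have hgR : LinearIndependent R fun j => ((g j : P)) :=
      g.linearIndependent.map' (LinearMap.ker pr).subtype (Submodule.ker_subtype _)
    have hgc_indep : LinearIndependent K gc := by
      rw [← LinearIndependent.iff_fractionRing (R := R)]
      exact hgR.map' c (LinearMap.ker_eq_bot.mpr hc)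
    set QK : Submodule K (ι₀ → K) := Submodule.span K (Set.range gc) with hQKdef
    have hmemQK : ∀ v : P, pr v = 0 → c v ∈ QK := by
      intro v hv
      have hvQ : v ∈ LinearMap.ker pr := hv
      have h2 : (⟨v, hvQ⟩ : LinearMap.ker pr) = ∑ j, g.repr ⟨v, hvQ⟩ j • g j :=
        (Module.Basis.sum_repr g ⟨v, hvQ⟩).symm
      have h3 : v = ∑ j, g.repr ⟨v, hvQ⟩ j • ((g j : P)) := by
        have := congrArg Subtype.val h2
        simpa only [Submodule.coe_sum, Submodule.coe_smul] using this
      rw [h3, map_sum]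
      refine Submodule.sum_mem _ fun j _ => ?_
      rw [map_smul]
      exact Submodule.smul_of_tower_mem _ _ (Submodule.subset_span ⟨j, rfl⟩)
    -- lifts of the images of the basis under the semilinear endomorphism
    have hxex : ∀ i : ι₀, ∃ w, pr w = φH a (pr (e i)) := fun i => hpr _
    choose x hx using hxex
    let xc : ι₀ → (ι₀ → K) := fun i => c (x i)
    let q : (ι₀ → K) →ₗ[K] ((ι₀ → K) ⧸ QK) := QK.mkQ
    let xb : ι₀ → ((ι₀ → K) ⧸ QK) := fun i => q (xc i)
    -- the span of the range of `φH a` is contained in that of the `pr (x i)`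
    have hspanH : Submodule.span R (Set.range (φH a)) ≤
        Submodule.span R (Set.range fun i => pr (x i)) := by
      rw [Submodule.span_le]
      rintro _ ⟨hval, rfl⟩
      obtain ⟨w, rfl⟩ := hpr hval
      have hw : φH a (pr w) = ∑ i, φR (e.repr w i) • pr (x i) := by
        conv_lhs => rw [← Module.Basis.sum_repr e w]
        rw [map_sum, map_sum]
        refine Finset.sum_congr rfl fun i _ => ?_
        rw [map_smul, LinearMap.map_smulₛₗ, hx]
      rw [hw]
      exact Submodule.sum_mem _ fun i _ =>
        Submodule.smul_mem _ _ (Submodule.subset_span ⟨i, rfl⟩)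
    have hpk : (algebraMap R K ((p : R) ^ k)) ≠ 0 := by
      have h1 : ((p : R)) ^ k ≠ 0 :=
        pow_ne_zero _ (Nat.cast_ne_zero.mpr hp.ne_zero)
      exact fun h => h1 (hinj (by rwa [map_zero]))
    -- every vector of `V` has image in the span of the `xb i`
    have hq_span : ∀ v : P, q (c v) ∈ Submodule.span K (Set.range xb) := by
      intro v
      obtain ⟨t, ht⟩ := (Submodule.mem_span_range_iff_exists_fun (R := R)).mp (hspanH (hk (pr v)))
      have hker : pr ((p : R) ^ k • v - ∑ i, t i • x i) = 0 := by
        rw [map_sub, map_smul, map_sum, sub_eq_zero]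
        rw [← ht]
        exact Finset.sum_congr rfl fun i _ => (map_smul pr _ _).symm
      have hQ := hmemQK _ hker
      have h1 : ((p : R) ^ k) • q (c v) = ∑ i, t i • xb i := by
        have h0 : q (c ((p : R) ^ k • v - ∑ i, t i • x i)) = 0 := by
          rw [Submodule.mkQ_apply, Submodule.Quotient.mk_eq_zero]
          exact hQ
        rw [map_sub, map_sub, sub_eq_zero, map_smul, LinearMap.map_smul_of_tower,
          map_sum, map_sum] at h0
        rw [h0]
        refine Finset.sum_congr rfl fun i _ => ?_
        rw [map_smul, LinearMap.map_smul_of_tower]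
      have h2 : (algebraMap R K ((p : R) ^ k)) • q (c v) ∈
          Submodule.span K (Set.range xb) := by
        rw [algebraMap_smul, h1]
        exact Submodule.sum_mem _ fun i _ =>
          Submodule.smul_of_tower_mem _ _ (Submodule.subset_span ⟨i, rfl⟩)
      have h3 := Submodule.smul_mem _ ((algebraMap R K ((p : R) ^ k))⁻¹) h2
      rwa [inv_smul_smul₀ hpk] at h3
    -- the `xb i` span the quotient
    have hWtop : Submodule.span K (Set.range xb) = ⊤ := by
      rw [eq_top_iff]
      rintro w -
      obtain ⟨u, rfl⟩ := Submodule.mkQ_surjective QK w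
      have hV : Submodule.span K (Set.range fun i => c (e i)) = ⊤ := by
        have hce : (fun i => c (e i)) = ⇑(Pi.basisFun K ι₀) := by
          funext i j
          show algebraMap R K (e.repr (e i) j) = _
          rw [Module.Basis.repr_self_apply, Pi.basisFun_apply]
          by_cases h : i = j <;> simp [h, Pi.single_apply]
        rw [hce]
        exact (Pi.basisFun K ι₀).span_eq
      have hu : u ∈ Submodule.span K (Set.range fun i => c (e i)) := by rw [hV]; trivial
      obtain ⟨κ, hκ⟩ := (Submodule.mem_span_range_iff_exists_fun (R := K)).mp hu
      have : QK.mkQ u = ∑ i, κ i • q (c (e i)) := by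
        rw [← hκ, map_sum]
        exact Finset.sum_congr rfl fun i _ => by rw [map_smul]
      rw [this]
      exact Submodule.sum_mem _ fun i _ => Submodule.smul_mem _ _ (hq_span (e i))
    -- extract a basis of the quotient from the spanning family
    obtain ⟨t, hts, htspan, htindep⟩ := exists_linearIndependent K (Set.range xb)
    rw [hWtop] at htspan
    haveI : IsNoetherian K ((ι₀ → K) ⧸ QK) := inferInstance
    haveI : Finite t := LinearIndependent.finite_of_isNoetherian htindep
    haveI : Fintype t := Fintype.ofFinite _
    let bW : Module.Basis t K ((ι₀ → K) ⧸ QK) :=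
      Module.Basis.mk htindep (by rw [Subtype.range_coe, htspan])
    have hfex : ∀ w : t, ∃ i, xb i = (w : ((ι₀ → K) ⧸ QK)) := fun w => hts w.2
    choose f hf using hfex
    have hfinj : Function.Injective f := by
      intro w1 w2 h12
      apply Subtype.val_injective
      rw [← hf w1, ← hf w2, h12]
    set S : Set ι₀ := Set.range f with hSdef
    -- cardinality count
    have hcard : Fintype.card {i : ι₀ // i ∉ S} = m := by
      have hfr1 : Module.finrank K ((ι₀ → K) ⧸ QK) + Module.finrank K QK =
          Module.finrank K (ι₀ → K) := Submodule.finrank_quotient_add_finrank QK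
      have hfrV : Module.finrank K (ι₀ → K) = Fintype.card ι₀ := Module.finrank_pi K
      have hfr2 : Module.finrank K ((ι₀ → K) ⧸ QK) = Fintype.card t :=
        Module.finrank_eq_card_basis bW
      have hfr3 : Module.finrank K QK = m := by
        rw [hQKdef]
        rw [finrank_span_eq_card hgc_indep]
        simp
      have hS1 : Fintype.card S = Fintype.card t := Set.card_range_of_injective hfinj
      have hS2 : Fintype.card {i : ι₀ // i ∉ S} = Fintype.card ι₀ - Fintype.card S :=
        Fintype.card_subtype_compl _
      omega
    let σ : {i : ι₀ // i ∉ S} ≃ Fin m :=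
      Fintype.equivOfCardEq (by rw [hcard, Fintype.card_fin])
    have hf' : ∀ w : t, q (xc (f w)) = (w : ((ι₀ → K) ⧸ QK)) := hf
    -- the complement `Xs`
    set Xs : Submodule K (ι₀ → K) :=
      Submodule.span K (Set.range fun w : t => xc (f w)) with hXdef
    have hdisj : Xs ⊓ QK = ⊥ := by
      rw [eq_bot_iff]
      rintro v ⟨hvX, hvQ⟩
      obtain ⟨κ, hκ⟩ := (Submodule.mem_span_range_iff_exists_fun (R := K)).mp hvX
      have hqv : q v = 0 := by
        rw [Submodule.mkQ_apply, Submodule.Quotient.mk_eq_zero]; exact hvQ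
      have h1 : ∑ w : t, κ w • ((w : ((ι₀ → K) ⧸ QK))) = 0 := by
        rw [← hqv, ← hκ, map_sum]
        exact Finset.sum_congr rfl fun w _ => by rw [map_smul, hf' w]
      have hz := Fintype.linearIndependent_iff.mp htindep κ h1
      simp only [Submodule.mem_bot]
      rw [← hκ]
      exact Finset.sum_eq_zero fun w _ => by rw [hz w, zero_smul]
    have hsup : Xs ⊔ QK = ⊤ := by
      rw [eq_top_iff]
      rintro v -
      have hqv : q v ∈ Submodule.span K (Set.range ((↑) : t → ((ι₀ → K) ⧸ QK))) := by
        rw [Subtype.range_coe, htspan]; trivial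
      obtain ⟨κ, hκ⟩ := (Submodule.mem_span_range_iff_exists_fun (R := K)).mp hqv
      refine Submodule.mem_sup.mpr ⟨∑ w : t, κ w • xc (f w), ?_,
        v - ∑ w : t, κ w • xc (f w), ?_, by abel⟩
      · exact Submodule.sum_mem _ fun w _ =>
          Submodule.smul_mem _ _ (Submodule.subset_span ⟨w, rfl⟩)
      · have hqz : q (v - ∑ w : t, κ w • xc (f w)) = 0 := by
          rw [map_sub, map_sum, sub_eq_zero, ← hκ]
          exact (Finset.sum_congr rfl fun w _ => by rw [map_smul, hf' w]).symm
        rw [Submodule.mkQ_apply, Submodule.Quotient.mk_eq_zero] at hqz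
        exact hqz
    have hcompl : IsCompl Xs QK := ⟨disjoint_iff.mpr hdisj, codisjoint_iff.mpr hsup⟩
    let π2 : (ι₀ → K) →ₗ[K] QK := QK.linearProjOfIsCompl Xs hcompl.symm
    have hπ2X : ∀ v ∈ Xs, π2 v = 0 := fun v hv =>
      Submodule.linearProjOfIsCompl_apply_right hcompl.symm ⟨v, hv⟩
    have hπ2Q : ∀ v (hv : v ∈ QK), π2 v = ⟨v, hv⟩ := fun v hv =>
      Submodule.linearProjOfIsCompl_apply_left hcompl.symm ⟨v, hv⟩
    -- decompose the `xc i`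
    have hdecomp : ∀ i : ι₀, ∃ sX ∈ Xs, ∃ u ∈ QK, xc i = sX + u := by
      intro i
      have hmem : xc i ∈ Xs ⊔ QK := by rw [hsup]; trivial
      obtain ⟨sX, hsX, u, hu, huv⟩ := Submodule.mem_sup.mp hmem
      exact ⟨sX, hsX, u, hu, huv.symm⟩
    choose sfun hsfun ufun hufun hxcdecomp using hdecomp
    have hαex : ∀ i : ι₀, ∃ α : Fin m → K, ∑ j, α j • gc j = ufun i := by
      intro i
      have := hufun i
      rw [hQKdef] at this
      exact (Submodule.mem_span_range_iff_exists_fun (R := K)).mp this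
    choose α hα using hαex
    -- common denominator
    obtain ⟨dd, hdd2⟩ := IsLocalization.exist_integer_multiples_of_finite
      (nonZeroDivisors R) (S := K) (fun ij : ι₀ × Fin m => α ij.1 ij.2)
    have hβex : ∀ ij : ι₀ × Fin m, ∃ b : R, algebraMap R K b = (dd : R) • α ij.1 ij.2 :=
      fun ij => hdd2 ij
    choose β hβ using hβex
    set dK : K := algebraMap R K (dd : R) with hdKdef
    let vP : ι₀ → P := fun i => ∑ j, β (i, j) • ((g j : P))
    have hvPQ : ∀ i, pr (vP i) = 0 := by
      intro i
      rw [map_sum]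
      exact Finset.sum_eq_zero fun j _ => by rw [map_smul, hgker, smul_zero]
    have hcvP : ∀ i, c (vP i) = dK • ufun i := by
      intro i
      rw [map_sum]
      have h1 : ∀ j : Fin m, c (β (i, j) • ((g j : P))) = (dK * α i j) • gc j := by
        intro j
        have hβ' : algebraMap R K (β (i, j)) = (dd : R) • α i j := hβ (i, j)
        have hsc : (dd : R) • α i j = dK * α i j := by
          rw [Algebra.smul_def, hdKdef]
        rw [map_smul, ← algebraMap_smul K (β (i, j)) (gc j), hβ', hsc]
      rw [Finset.sum_congr rfl fun j _ => h1 j, ← hα i, Finset.smul_sum]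
      exact Finset.sum_congr rfl fun j _ => mul_smul _ _ _
    -- choose the generic scalar
    let U : Matrix (Fin m) (Fin m) K :=
      fun r s => (1 - dK) * α ((σ.symm r : {i : ι₀ // i ∉ S}) : ι₀) s
    obtain ⟨cch, hcch⟩ := exists_det_add_ne_zero (algebraMap R K) hinj U
    set cK : K := algebraMap R K cch with hcKdef
    -- the perturbed lifts
    let y : ι₀ → P := fun i =>
      if h : i ∈ S then x i else x i - vP i + cch • ((g (σ ⟨i, h⟩) : P))
    refine ⟨y, ?_, ?_⟩
    · intro i
      by_cases h : i ∈ S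
      · simp only [y, dif_pos h]; exact hx i
      · simp only [y, dif_neg h]
        rw [map_add, map_sub, hvPQ, map_smul, hgker, smul_zero, sub_zero, add_zero]
        exact hx i
    · -- linear independence
      have hcyS : ∀ i, i ∈ S → c (y i) = xc i := by
        intro i h; simp only [y, dif_pos h]; rfl
      have hw : ∀ i' : {i : ι₀ // i ∉ S}, c (y (i' : ι₀))
          = sfun (i' : ι₀) + ((1 - dK) • ufun (i' : ι₀) + cK • gc (σ i')) := by
        intro i'
        simp only [y, dif_neg i'.2, Subtype.coe_eta]
        rw [map_add, map_sub, hcvP, map_smul,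
          ← algebraMap_smul K cch (gc (σ i')), ← hcKdef,
          show c (x (i' : ι₀)) = sfun (i' : ι₀) + ufun (i' : ι₀) from hxcdecomp _,
          sub_smul, one_smul]
        abel
      have hwQK : ∀ i' : {i : ι₀ // i ∉ S},
          ((1 - dK) • ufun (i' : ι₀) + cK • gc (σ i')) ∈ QK := by
        intro i'
        exact Submodule.add_mem _ (Submodule.smul_mem _ _ (hufun _))
          (Submodule.smul_mem _ _ (Submodule.subset_span ⟨_, rfl⟩))
      have hwgc : ∀ i' : {i : ι₀ // i ∉ S}, (1 - dK) • ufun (i' : ι₀) + cK • gc (σ i')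
          = ∑ j, ((cK • (1 : Matrix (Fin m) (Fin m) K) + U) (σ i') j) • gc j := by
        intro i'
        have h1 : ∀ j, ((cK • (1 : Matrix (Fin m) (Fin m) K) + U) (σ i') j)
            = cK * (if σ i' = j then 1 else 0) + (1 - dK) * α (i' : ι₀) j := by
          intro j
          rw [Matrix.add_apply, Matrix.smul_apply, Matrix.one_apply]
          simp [U, smul_eq_mul]
        have h2 : ∑ j, (cK * (if σ i' = j then (1 : K) else 0)) • gc j = cK • gc (σ i') := by
          simp [mul_ite, mul_one, mul_zero, ite_smul, zero_smul]
        have h3 : ∑ j, ((1 - dK) * α (i' : ι₀) j) • gc j = (1 - dK) • ufun (i' : ι₀) := by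
          simp_rw [mul_smul]
          rw [← Finset.smul_sum, hα]
        simp_rw [h1, add_smul]
        rw [Finset.sum_add_distrib, h2, h3, add_comm]
      have hcyK : LinearIndependent K fun i => c (y i) := by
        rw [Fintype.linearIndependent_iff]
        intro bco hbco
        have hstep1 : ∀ i, ∀ h : i ∉ S, bco i = 0 := by
          have h1 : ∑ i, bco i • π2 (c (y i)) = 0 := by
            have h0 := congrArg π2 hbco
            rw [map_sum, map_zero] at h0
            rw [← h0]
            exact Finset.sum_congr rfl fun i _ => (map_smul π2 _ _).symm
          rw [← Finset.sum_filter_add_sum_filter_not Finset.univ (· ∈ S)] at h1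
          have h3 : ∀ i ∈ Finset.univ.filter (· ∈ S), bco i • π2 (c (y i)) = 0 := by
            intro i hi
            have hiS : i ∈ S := (Finset.mem_filter.mp hi).2
            rw [hcyS i hiS]
            obtain ⟨w, rfl⟩ := hiS
            rw [hπ2X _ (Submodule.subset_span ⟨w, rfl⟩), smul_zero]
          rw [Finset.sum_eq_zero h3, zero_add] at h1
          have h4 : ∑ i' : {i : ι₀ // i ∉ S},
              bco (i' : ι₀) • π2 (c (y (i' : ι₀))) = 0 := by
            rw [← h1]
            exact (Finset.sum_subtype _ (by simp) fun i => bco i • π2 (c (y i))).symm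
          have h5 : ∀ i' : {i : ι₀ // i ∉ S},
              π2 (c (y (i' : ι₀))) = ⟨(1 - dK) • ufun (i' : ι₀) + cK • gc (σ i'), hwQK i'⟩ := by
            intro i'
            rw [hw i', map_add, hπ2X _ (hsfun _), zero_add, hπ2Q _ (hwQK i')]
          have h6 : ∑ i' : {i : ι₀ // i ∉ S},
              bco (i' : ι₀) • ((1 - dK) • ufun (i' : ι₀) + cK • gc (σ i')) = 0 := by
            have h6' := congrArg QK.subtype h4
            rw [map_sum, map_zero] at h6'
            rw [← h6']
            refine Finset.sum_congr rfl fun i' _ => ?_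
            rw [h5 i', map_smul]
            rfl
          simp_rw [hwgc] at h6
          have h7 : ∑ j, (∑ i' : {i : ι₀ // i ∉ S},
              bco (i' : ι₀) * (cK • (1 : Matrix (Fin m) (Fin m) K) + U) (σ i') j) • gc j
              = 0 := by
            rw [← h6]
            calc _ = ∑ j, ∑ i' : {i : ι₀ // i ∉ S}, (bco (i' : ι₀) *
                  (cK • (1 : Matrix (Fin m) (Fin m) K) + U) (σ i') j) • gc j :=
                  Finset.sum_congr rfl fun j _ => Finset.sum_smul
              _ = ∑ i' : {i : ι₀ // i ∉ S}, ∑ j, (bco (i' : ι₀) *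
                  (cK • (1 : Matrix (Fin m) (Fin m) K) + U) (σ i') j) • gc j := Finset.sum_comm
              _ = _ := Finset.sum_congr rfl fun i' _ => by
                  rw [Finset.smul_sum]
                  exact Finset.sum_congr rfl fun j _ => (smul_smul _ _ _).symm
          have h8 := Fintype.linearIndependent_iff.mp hgc_indep _ h7
          set bv : Fin m → K := fun r => bco ((σ.symm r : {i : ι₀ // i ∉ S}) : ι₀) with hbvdef
          have h9 : ∀ j, ∑ r : Fin m,
              bv r * (cK • (1 : Matrix (Fin m) (Fin m) K) + U) r j = 0 := by
            intro j
            rw [← h8 j]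
            refine Fintype.sum_equiv σ.symm _ _ fun r => ?_
            rw [Equiv.apply_symm_apply]
          have h10 : Matrix.vecMul bv (cK • (1 : Matrix (Fin m) (Fin m) K) + U) = 0 := by
            funext j
            simpa [Matrix.vecMul, dotProduct] using h9 j
          have hMunit : IsUnit (cK • (1 : Matrix (Fin m) (Fin m) K) + U).det :=
            isUnit_iff_ne_zero.mpr hcch
          have h11 : bv = 0 := by
            have h12 := congrArg
              (fun v => Matrix.vecMul v (cK • (1 : Matrix (Fin m) (Fin m) K) + U)⁻¹) h10
            beta_reduce at h12
            rw [Matrix.vecMul_vecMul, Matrix.mul_nonsing_inv _ hMunit, Matrix.vecMul_one,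
              Matrix.zero_vecMul] at h12
            exact h12
          intro i h
          have h13 := congrFun h11 (σ ⟨i, h⟩)
          simp only [hbvdef, Equiv.symm_apply_apply, Pi.zero_apply] at h13
          exact h13
        intro i
        by_cases h : i ∈ S
        · have h13 : ∑ i ∈ Finset.univ.filter (· ∈ S), bco i • c (y i) = 0 := by
            rw [← Finset.sum_filter_add_sum_filter_not Finset.univ (· ∈ S)] at hbco
            have hz : ∑ i ∈ Finset.univ.filter (fun i => ¬ i ∈ S), bco i • c (y i) = 0 :=
              Finset.sum_eq_zero fun i hi => by
                rw [hstep1 i (Finset.mem_filter.mp hi).2, zero_smul]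
            rwa [hz, add_zero] at hbco
          have hq13 : ∑ i ∈ Finset.univ.filter (· ∈ S), bco i • q (c (y i)) = 0 := by
            have h0 := congrArg q h13
            rw [map_sum, map_zero] at h0
            rw [← h0]
            exact Finset.sum_congr rfl fun i _ => (map_smul q _ _).symm
          have hsub : ∑ i' : {i : ι₀ // i ∈ S}, bco (i' : ι₀) • q (c (y (i' : ι₀))) = 0 := by
            rw [← hq13]
            exact (Finset.sum_subtype _
              (fun x => by simp only [Finset.mem_filter, Finset.mem_univ, true_and]; rfl)
              fun i => bco i • q (c (y i))).symm
          have h14 : ∑ w : t, bco (f w) • ((w : ((ι₀ → K) ⧸ QK))) = 0 := by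
            rw [← hsub]
            refine Fintype.sum_equiv (Equiv.ofInjective f hfinj) _ _ fun w => ?_
            have hcoe : ((Equiv.ofInjective f hfinj w : {i : ι₀ // i ∈ S}) : ι₀) = f w := rfl
            rw [hcoe, hcyS _ ⟨w, rfl⟩, hf' w]
          have h15 := Fintype.linearIndependent_iff.mp htindep _ h14
          obtain ⟨w, rfl⟩ := h
          exact h15 w
        · exact hstep1 i h
      have hcyR : LinearIndependent R fun i => c (y i) :=
        (LinearIndependent.iff_fractionRing (R := R) (K := K)).mpr hcyK
      exact LinearIndependent.of_comp c hcyR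
  -- construct φP from y
  refine ⟨{ toFun := fun v => ∑ i, φR (e.repr v i) • y i
            map_add' := by
              intro u v
              simp [map_add, Finsupp.add_apply, add_smul, Finset.sum_add_distrib]
            map_smul' := by
              intro r v
              simp [Finsupp.smul_apply, smul_eq_mul, map_mul, mul_smul, Finset.smul_sum] },
        ?_, ?_⟩
  · intro v
    simp only [LinearMap.coe_mk, AddHom.coe_mk]
    rw [map_sum]
    have : ∀ i, pr (φR (e.repr v i) • y i) = φR (e.repr v i) • φH a (pr (e i)) := by
      intro i; rw [map_smul, hy]
    rw [Finset.sum_congr rfl fun i _ => this i]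
    have : ∑ i, φR (e.repr v i) • φH a (pr (e i)) = φH a (∑ i, e.repr v i • pr (e i)) := by
      rw [map_sum]
      exact Finset.sum_congr rfl fun i _ => (LinearMap.map_smulₛₗ (φH a) _ _).symm
    rw [this]
    congr 1
    conv_rhs => rw [← Module.Basis.sum_repr e v]
    rw [map_sum]
    exact Finset.sum_congr rfl fun i _ => (map_smul pr _ _).symm
  · intro ι' b
    haveI : Finite ι' := Module.Finite.finite_basis b
    haveI : Fintype ι' := Fintype.ofFinite ι'
    rw [Fintype.linearIndependent_iff]
    intro cc hcc
    have hAB : ∀ j j', ∑ i, e.repr (b j) i * b.repr (e i) j' = if j = j' then (1 : R) else 0 := by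
      intro j j'
      calc ∑ i, e.repr (b j) i * b.repr (e i) j'
          = b.repr (∑ i, e.repr (b j) i • e i) j' := by
            rw [map_sum, Finsupp.finset_sum_apply]
            simp only [map_smul, Finsupp.smul_apply, smul_eq_mul]
        _ = if j = j' then 1 else 0 := by rw [Module.Basis.sum_repr e (b j), Module.Basis.repr_self_apply]
    have h2 : ∀ i, ∑ j, cc j * φR (e.repr (b j) i) = 0 := by
      have hre : ∑ i, (∑ j, cc j * φR (e.repr (b j) i)) • y i = 0 := by
        rw [← hcc]
        simp only [LinearMap.coe_mk, AddHom.coe_mk]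
        simp_rw [Finset.smul_sum, smul_smul, Finset.sum_smul]
        rw [Finset.sum_comm]
      exact Fintype.linearIndependent_iff.mp hyind _ hre
    intro j'
    have key : ∑ j, cc j * φR (∑ i, e.repr (b j) i * b.repr (e i) j') = cc j' := by
      have h3 : ∀ j, φR (∑ i, e.repr (b j) i * b.repr (e i) j') = if j = j' then (1:R) else 0 := by
        intro j; rw [hAB]; by_cases h : j = j' <;> simp [h]
      simp only [h3, mul_ite, mul_one, mul_zero]
      simp
    rw [← key]
    simp_rw [map_sum, map_mul, Finset.mul_sum, ← mul_assoc]
    rw [Finset.sum_comm]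
    refine Finset.sum_eq_zero fun i _ => ?_
    rw [← Finset.sum_mul, h2 i, zero_mul]
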